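/- arXiv:1510.07247 — 5 statements merged into one kernel-verified Lean document; each statement's English description precedes it below -/
import Mathlib

section
/- The until-induction rule (U-ind) is derivable in the Hilbert system LTL: if χ → (¬ψ ∧ ○χ) is derivable in LTL, then χ → ¬(φUψ) is derivable in LTL. -/
/-- Temporal formulas: φ ::= P | ⊥ | φ→φ | ○φ | □φ | φUψ. -/
inductive TFml : Type
  | atom : ℕ → TFml
  | bot : TFml
  | imp : TFml → TFml → TFml
  | next : TFml → TFml
  | always : TFml → TFml
  | untl : TFml → TFml → TFml

namespace TFml

/-- ¬φ := φ → ⊥ -/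
def neg (φ : TFml) : TFml := φ.imp bot
/-- φ ∨ ψ := ¬φ → ψ -/
def or' (φ ψ : TFml) : TFml := (neg φ).imp ψ
/-- φ ∧ ψ := ¬(¬φ ∨ ¬ψ) -/
def and' (φ ψ : TFml) : TFml := neg (or' (neg φ) (neg ψ))
/-- φ ↔ ψ := (φ → ψ) ∧ (ψ → φ) -/
def iff' (φ ψ : TFml) : TFml := and' (φ.imp ψ) (ψ.imp φ)
/-- ◇φ := ¬□¬φ -/
def diam (φ : TFml) : TFml := neg (always (neg φ))

/-- Propositional tautologies: true under every valuation that interprets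
⊥ and → classically (all other formulas are treated as atoms). -/
def Tautology (φ : TFml) : Prop :=
  ∀ v : TFml → Prop, ¬ v bot → (∀ α β, v (imp α β) ↔ (v α → v β)) → v φ

/-- The Hilbert system LTL. -/
inductive LTL : TFml → Prop
  | taut {φ : TFml} : Tautology φ → LTL φ
  | nextK (φ ψ : TFml) : LTL ((next (φ.imp ψ)).imp ((next φ).imp (next ψ)))
  | alwaysK (φ ψ : TFml) : LTL ((always (φ.imp ψ)).imp ((always φ).imp (always ψ)))
  | funAx (φ : TFml) : LTL (iff' (next (neg φ)) (neg (next φ)))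
  | mix (φ : TFml) : LTL ((always φ).imp (and' φ (next (always φ))))
  | ind (φ : TFml) : LTL ((always (φ.imp (next φ))).imp (φ.imp (always φ)))
  | u1 (φ ψ : TFml) : LTL ((untl φ ψ).imp (diam ψ))
  | u2 (φ ψ : TFml) : LTL (iff' (untl φ ψ) (or' ψ (and' φ (next (untl φ ψ)))))
  | mp {φ ψ : TFml} : LTL (φ.imp ψ) → LTL φ → LTL ψ
  | nextNec {φ : TFml} : LTL φ → LTL (next φ)
  | alwaysNec {φ : TFml} : LTL φ → LTL (always φ)

end TFml


namespace TFml

lemma taut_of (φ : TFml)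
    (hp : ∀ v : TFml → Prop, ¬ v bot → (∀ α β, v (imp α β) ↔ (v α → v β)) → v φ) :
    LTL φ := LTL.taut hp

lemma mp2 {A B C : TFml} (h1 : LTL (A.imp (B.imp C))) (h2 : LTL A) (h3 : LTL B) :
    LTL C := LTL.mp (LTL.mp h1 h2) h3

end TFml

theorem ltl_until_induction_rule (χ φ ψ : TFml)
    (h : TFml.LTL (χ.imp (TFml.and' (TFml.neg ψ) (TFml.next χ)))) :
    TFml.LTL (χ.imp (TFml.neg (TFml.untl φ ψ))) := by

  -- χ → ¬ψ
  have h1 : TFml.LTL (χ.imp (TFml.neg ψ)) := by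
    refine TFml.LTL.mp (TFml.taut_of _ ?_) h
    intro v hb hi
    simp only [TFml.and', TFml.or', TFml.neg, hi]
    tauto
  -- χ → ○χ
  have h2 : TFml.LTL (χ.imp (TFml.next χ)) := by
    refine TFml.LTL.mp (TFml.taut_of _ ?_) h
    intro v hb hi
    simp only [TFml.and', TFml.or', TFml.neg, hi]
    tauto
  -- χ → □χ
  have h3 : TFml.LTL (χ.imp (TFml.always χ)) :=
    TFml.LTL.mp (TFml.LTL.ind χ) (TFml.LTL.alwaysNec h2)
  -- □χ → □¬ψ
  have h4 : TFml.LTL ((TFml.always χ).imp (TFml.always (TFml.neg ψ))) :=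
    TFml.LTL.mp (TFml.LTL.alwaysK χ (TFml.neg ψ)) (TFml.LTL.alwaysNec h1)
  -- χ → □¬ψ
  have h5 : TFml.LTL (χ.imp (TFml.always (TFml.neg ψ))) := by
    refine TFml.mp2 (TFml.taut_of _ ?_) h3 h4
    intro v hb hi
    simp only [hi]
    tauto
  -- φUψ → ◇ψ  (= ¬□¬ψ)
  have h6 := TFml.LTL.u1 φ ψ
  -- combine: (χ→A) → ((U→(A→⊥)) → (χ → (U→⊥)))
  refine TFml.mp2 (TFml.taut_of _ ?_) h5 h6
  intro v hb hi
  simp only [TFml.diam, TFml.neg, hi]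
  tauto
end

section
/- In the alternative Hilbert system LTL^alt, the axiom (mix) is derivable: for every formula φ, the formula □φ → (φ ∧ ○□φ) is derivable in LTL^alt, where ◇φ := ⊤Uφ and □φ := ¬◇¬φ. -/
/-- Temporal formulas without primitive □: φ ::= P | ⊥ | φ→φ | ○φ | φUψ. -/
inductive AFml : Type
  | atom : ℕ → AFml
  | bot : AFml
  | imp : AFml → AFml → AFml
  | next : AFml → AFml
  | untl : AFml → AFml → AFml

namespace AFml

/-- ¬φ := φ → ⊥ -/
def neg (φ : AFml) : AFml := φ.imp bot
/-- ⊤ := ¬⊥ -/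
def top : AFml := neg bot
/-- φ ∨ ψ := ¬φ → ψ -/
def or' (φ ψ : AFml) : AFml := (neg φ).imp ψ
/-- φ ∧ ψ := ¬(¬φ ∨ ¬ψ) -/
def and' (φ ψ : AFml) : AFml := neg (or' (neg φ) (neg ψ))
/-- φ ↔ ψ := (φ → ψ) ∧ (ψ → φ) -/
def iff' (φ ψ : AFml) : AFml := and' (φ.imp ψ) (ψ.imp φ)
/-- ◇φ := ⊤ U φ -/
def diam (φ : AFml) : AFml := untl top φ
/-- □φ := ¬◇¬φ = ¬(⊤ U ¬φ) -/
def always (φ : AFml) : AFml := neg (diam (neg φ))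

/-- Propositional tautologies: true under every valuation that interprets
⊥ and → classically (all other formulas are treated as atoms). -/
def Tautology (φ : AFml) : Prop :=
  ∀ v : AFml → Prop, ¬ v bot → (∀ α β, v (imp α β) ↔ (v α → v β)) → v φ

/-- The alternative Hilbert system LTL^alt. -/
inductive LTLalt : AFml → Prop
  | taut {φ : AFml} : Tautology φ → LTLalt φ
  | nextK (φ ψ : AFml) : LTLalt ((next (φ.imp ψ)).imp ((next φ).imp (next ψ)))
  | funAx (φ : AFml) : LTLalt (iff' (next (neg φ)) (neg (next φ)))
  | u2 (φ ψ : AFml) : LTLalt (iff' (untl φ ψ) (or' ψ (and' φ (next (untl φ ψ)))))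
  | mp {φ ψ : AFml} : LTLalt (φ.imp ψ) → LTLalt φ → LTLalt ψ
  | nextNec {φ : AFml} : LTLalt φ → LTLalt (next φ)
  | untilInd {χ φ ψ : AFml} : LTLalt (χ.imp (and' (neg ψ) (next χ))) →
      LTLalt (χ.imp (neg (untl φ ψ)))

end AFml

theorem ltlalt_mix (φ : AFml) :
    AFml.LTLalt ((AFml.always φ).imp (AFml.and' φ (AFml.next (AFml.always φ)))) := by
  classical
  set U := AFml.untl AFml.top (AFml.neg φ) with hU
  -- reverse direction of U2: (¬φ ∨ (⊤ ∧ ○U)) → U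
  have h1 : AFml.LTLalt ((AFml.or' (AFml.neg φ)
      (AFml.and' AFml.top (AFml.next U))).imp U) := by
    refine AFml.LTLalt.mp (AFml.LTLalt.taut ?_) (AFml.LTLalt.u2 AFml.top (AFml.neg φ))
    intro v hb hi
    simp only [AFml.iff', AFml.and', AFml.or', AFml.neg, AFml.top, hi]
    tauto
  -- from funAx: ¬○U → ○¬U
  have h2 : AFml.LTLalt ((AFml.neg (AFml.next U)).imp (AFml.next (AFml.neg U))) := by
    refine AFml.LTLalt.mp (AFml.LTLalt.taut ?_) (AFml.LTLalt.funAx U)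
    intro v hb hi
    simp only [AFml.iff', AFml.and', AFml.or', AFml.neg, hi]
    tauto
  have h3 : AFml.LTLalt ((AFml.neg U).imp (AFml.and' φ (AFml.next (AFml.neg U)))) := by
    refine AFml.LTLalt.mp (AFml.LTLalt.mp (AFml.LTLalt.taut ?_) h1) h2
    intro v hb hi
    simp only [AFml.iff', AFml.and', AFml.or', AFml.neg, AFml.top, hi]
    tauto
  exact h3
end

section
/- In the alternative Hilbert system LTL^alt, the □-necessitation rule is derivable: if φ is derivable in LTL^alt, then □φ is derivable in LTL^alt, where □φ := ¬(⊤U¬φ). -/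
theorem ltlalt_always_nec (φ : AFml) (h : AFml.LTLalt φ) :
    AFml.LTLalt (AFml.always φ) := by
  open AFml in
  -- ⊢ ¬¬φ
  have hnn : LTLalt (neg (neg φ)) := by
    refine LTLalt.mp (LTLalt.taut ?_) h
    intro v hb hi
    simp only [neg, hi]
    tauto
  -- ⊢ ○⊤
  have hnt : LTLalt (next top) :=
    LTLalt.nextNec (LTLalt.taut (by intro v hb hi; simp only [top, neg, hi]; tauto))
  -- ⊢ ⊤ → (¬¬φ ∧ ○⊤)
  have step : LTLalt (top.imp (and' (neg (neg φ)) (next top))) := by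
    have t : LTLalt ((neg (neg φ)).imp ((next top).imp
        (top.imp (and' (neg (neg φ)) (next top))))) := by
      refine LTLalt.taut ?_
      intro v hb hi
      simp only [and', or', neg, top, hi]
      tauto
    exact LTLalt.mp (LTLalt.mp t hnn) hnt
  have hind : LTLalt (top.imp (neg (untl top (neg φ)))) :=
    LTLalt.untilInd step
  have ht : LTLalt top := LTLalt.taut (by intro v hb hi; simp only [top, neg, hi]; tauto)
  exact LTLalt.mp hind ht
end

section
/- For every agent i, formula φ, and justification term t, there is a justification term s(t) such that the formula [t]_i□φ → [s(t)]_i○φ is derivable in the Hilbert system J5LTL_CS extended with the principles (□-access) and (○-left) as additional axiom schemes. -/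
/-- Justification terms: t ::= c | x | !t | ?t | t+t | t·t, extended with
unary operations ⇓ (dDown), ⇑ (dUp), ↓ (down), ⇛ (rright), ⇚ (lleft). -/
inductive JTm : Type
  | const : ℕ → JTm
  | var : ℕ → JTm
  | bang : JTm → JTm
  | quest : JTm → JTm
  | plus : JTm → JTm → JTm
  | times : JTm → JTm → JTm
  | dDown : JTm → JTm   -- ⇓
  | dUp : JTm → JTm     -- ⇑
  | down : JTm → JTm    -- ↓
  | rright : JTm → JTm  -- ⇛
  | lleft : JTm → JTm   -- ⇚

/-- Formulas over h agents:
φ ::= P | ⊥ | φ→φ | ○φ | □φ | φUψ | [t]_i φ. -/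
inductive JFml (h : ℕ) : Type
  | atom : ℕ → JFml h
  | bot : JFml h
  | imp : JFml h → JFml h → JFml h
  | next : JFml h → JFml h
  | always : JFml h → JFml h
  | untl : JFml h → JFml h → JFml h
  | jbox : Fin h → JTm → JFml h → JFml h

namespace JFml

variable {h : ℕ}

/-- ¬φ := φ → ⊥ -/
def neg (φ : JFml h) : JFml h := φ.imp bot
/-- φ ∨ ψ := ¬φ → ψ -/
def or' (φ ψ : JFml h) : JFml h := (neg φ).imp ψ
/-- φ ∧ ψ := ¬(¬φ ∨ ¬ψ) -/
def and' (φ ψ : JFml h) : JFml h := neg (or' (neg φ) (neg ψ))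
/-- φ ↔ ψ := (φ → ψ) ∧ (ψ → φ) -/
def iff' (φ ψ : JFml h) : JFml h := and' (φ.imp ψ) (ψ.imp φ)
/-- ◇φ := ¬□¬φ -/
def diam (φ : JFml h) : JFml h := neg (always (neg φ))

/-- Propositional tautologies: true under every valuation that interprets
⊥ and → classically (all other formulas are treated as atoms). -/
def Tautology (φ : JFml h) : Prop :=
  ∀ v : JFml h → Prop, ¬ v bot → (∀ α β, v (imp α β) ↔ (v α → v β)) → v φ

/-- Axioms of J5LTL, extended by additional axiom schemes `Extra`. -/
inductive Axiom (Extra : JFml h → Prop) : JFml h → Prop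
  | taut {φ : JFml h} : Tautology φ → Axiom Extra φ
  | nextK (φ ψ : JFml h) :
      Axiom Extra ((next (φ.imp ψ)).imp ((next φ).imp (next ψ)))
  | alwaysK (φ ψ : JFml h) :
      Axiom Extra ((always (φ.imp ψ)).imp ((always φ).imp (always ψ)))
  | funAx (φ : JFml h) : Axiom Extra (iff' (next (neg φ)) (neg (next φ)))
  | mix (φ : JFml h) : Axiom Extra ((always φ).imp (and' φ (next (always φ))))
  | ind (φ : JFml h) :
      Axiom Extra ((always (φ.imp (next φ))).imp (φ.imp (always φ)))
  | u1 (φ ψ : JFml h) : Axiom Extra ((untl φ ψ).imp (diam ψ))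
  | u2 (φ ψ : JFml h) :
      Axiom Extra (iff' (untl φ ψ) (or' ψ (and' φ (next (untl φ ψ)))))
  | app (i : Fin h) (t s : JTm) (φ ψ : JFml h) :
      Axiom Extra ((jbox i t (φ.imp ψ)).imp
        ((jbox i s φ).imp (jbox i (t.times s) ψ)))
  | sum₁ (i : Fin h) (t s : JTm) (φ : JFml h) :
      Axiom Extra ((jbox i t φ).imp (jbox i (t.plus s) φ))
  | sum₂ (i : Fin h) (t s : JTm) (φ : JFml h) :
      Axiom Extra ((jbox i s φ).imp (jbox i (t.plus s) φ))
  | refl (i : Fin h) (t : JTm) (φ : JFml h) :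
      Axiom Extra ((jbox i t φ).imp φ)
  | posIntro (i : Fin h) (t : JTm) (φ : JFml h) :
      Axiom Extra ((jbox i t φ).imp (jbox i t.bang (jbox i t φ)))
  | negIntro (i : Fin h) (t : JTm) (φ : JFml h) :
      Axiom Extra ((neg (jbox i t φ)).imp (jbox i t.quest (neg (jbox i t φ))))
  | extra {φ : JFml h} : Extra φ → Axiom Extra φ

/-- `CS` is a constant specification (w.r.t. the axioms extended by `Extra`):
a set of formulas `[c]_i φ` where `c` is a proof constant and `φ` an axiom. -/
def IsCS (Extra : JFml h → Prop) (CS : Set (JFml h)) : Prop :=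
  ∀ ψ ∈ CS, ∃ (i : Fin h) (c : ℕ) (φ : JFml h),
    ψ = jbox i (JTm.const c) φ ∧ Axiom Extra φ

/-- `CS` is axiomatically appropriate: for every axiom `φ` and agent `i`
there is a constant `c` with `[c]_i φ ∈ CS`. -/
def AxAppropriate (Extra : JFml h → Prop) (CS : Set (JFml h)) : Prop :=
  ∀ φ : JFml h, Axiom Extra φ → ∀ i : Fin h, ∃ c : ℕ,
    jbox i (JTm.const c) φ ∈ CS

/-- The Hilbert system J5LTL_CS extended with additional axiom schemes `Extra`. -/
inductive Deriv (Extra : JFml h → Prop) (CS : Set (JFml h)) : JFml h → Prop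
  | ax {φ : JFml h} : Axiom Extra φ → Deriv Extra CS φ
  | mp {φ ψ : JFml h} : Deriv Extra CS (φ.imp ψ) → Deriv Extra CS φ →
      Deriv Extra CS ψ
  | nextNec {φ : JFml h} : Deriv Extra CS φ → Deriv Extra CS (next φ)
  | alwaysNec {φ : JFml h} : Deriv Extra CS φ → Deriv Extra CS (always φ)
  | constNec {φ : JFml h} : φ ∈ CS → Deriv Extra CS φ

/-- The principle (□-access): [t]_i□φ → □[⇓t]_iφ. -/
def BoxAccess : JFml h → Prop := fun χ =>
  ∃ (i : Fin h) (t : JTm) (φ : JFml h),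
    χ = (jbox i t (always φ)).imp (always (jbox i t.dDown φ))

/-- The principle (generalize): □[t]_iφ → [⇑t]_i□φ. -/
def Generalize : JFml h → Prop := fun χ =>
  ∃ (i : Fin h) (t : JTm) (φ : JFml h),
    χ = (always (jbox i t φ)).imp (jbox i t.dUp (always φ))

/-- The principle (○-access): [t]_i□φ → [↓t]_i○φ. -/
def NextAccess : JFml h → Prop := fun χ =>
  ∃ (i : Fin h) (t : JTm) (φ : JFml h),
    χ = (jbox i t (always φ)).imp (jbox i t.down (next φ))

/-- The principle (○-left): ○[t]_iφ → [⇚t]_i○φ. -/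
def NextLeft : JFml h → Prop := fun χ =>
  ∃ (i : Fin h) (t : JTm) (φ : JFml h),
    χ = (next (jbox i t φ)).imp (jbox i t.lleft (next φ))

end JFml

section Helpers
open JFml
variable {h : ℕ} {Extra : JFml h → Prop} {CS : Set (JFml h)}

lemma deriv_taut {φ : JFml h} (hφ : Tautology φ) : Deriv Extra CS φ :=
  Deriv.ax (Axiom.taut hφ)

lemma taut_syll (a b c : JFml h) :
    Tautology ((a.imp b).imp ((b.imp c).imp (a.imp c))) := by
  intro v hbot himp
  simp only [himp]; tauto

lemma deriv_syll {a b c : JFml h} (h1 : Deriv Extra CS (a.imp b))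
    (h2 : Deriv Extra CS (b.imp c)) : Deriv Extra CS (a.imp c) :=
  Deriv.mp (Deriv.mp (deriv_taut (taut_syll a b c)) h1) h2

lemma taut_and_left (a b : JFml h) : Tautology ((and' a b).imp a) := by
  intro v hbot himp
  simp only [and', or', neg, himp]; tauto

lemma taut_and_right (a b : JFml h) : Tautology ((and' a b).imp b) := by
  intro v hbot himp
  simp only [and', or', neg, himp]; tauto

end Helpers

open JFml in
/-- For every agent i, formula φ and term t there is a term s(t) with
(□-access), (○-left) ⊢_CS [t]_i□φ → [s(t)]_i○φ. -/
theorem jltl_box_to_next {h : ℕ} (CS : Set (JFml h))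
    (hCS : IsCS (fun χ => BoxAccess χ ∨ NextLeft χ) CS)
    (i : Fin h) (t : JTm) (φ : JFml h) :
    ∃ s : JTm,
      Deriv (fun χ => BoxAccess χ ∨ NextLeft χ) CS
        ((jbox i t (always φ)).imp (jbox i s (next φ))) := by
  classical
  set E := (fun χ => BoxAccess χ ∨ NextLeft χ)
  refine ⟨(t.dDown).lleft, ?_⟩
  set χ : JFml h := jbox i t.dDown φ with hχ
  -- step 1: [t]□φ → □[⇓t]φ
  have s1 : Deriv E CS ((jbox i t (always φ)).imp (always χ)) :=
    Deriv.ax (Axiom.extra (Or.inl ⟨i, t, φ, rfl⟩))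
  -- □χ → χ
  have boxT : Deriv E CS ((always χ).imp χ) :=
    deriv_syll (Deriv.ax (Axiom.mix χ)) (deriv_taut (taut_and_left _ _))
  -- □χ → ○□χ
  have s2 : Deriv E CS ((always χ).imp (next (always χ))) :=
    deriv_syll (Deriv.ax (Axiom.mix χ)) (deriv_taut (taut_and_right _ _))
  -- ○□χ → ○χ
  have s3 : Deriv E CS ((next (always χ)).imp (next χ)) :=
    Deriv.mp (Deriv.ax (Axiom.nextK (always χ) χ)) (Deriv.nextNec boxT)
  -- ○χ → [⇚⇓t]○φ
  have s4 : Deriv E CS ((next χ).imp (jbox i (t.dDown).lleft (next φ))) :=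
    Deriv.ax (Axiom.extra (Or.inr ⟨i, t.dDown, φ, rfl⟩))
  exact deriv_syll (deriv_syll (deriv_syll s1 s2) s3) s4
end

section
/- Let CS be an axiomatically appropriate constant specification. For every agent i, formula φ, and justification term t, there is a justification term s(t) such that the formula [t]_i□φ → [s(t)]_i□□φ is derivable in J5LTL_CS extended with the principle (generalize) as an additional axiom scheme. -/
open JFml in
/-- For every agent i, formula φ and term t there is a term s(t) with
(generalize) ⊢_CS [t]_i□φ → [s(t)]_i□□φ, for axiomatically appropriate CS. -/
theorem jltl_box_to_boxbox {h : ℕ} (CS : Set (JFml h))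
    (hCS : IsCS Generalize CS) (hApp : AxAppropriate Generalize CS)
    (i : Fin h) (t : JTm) (φ : JFml h) :
    ∃ s : JTm,
      Deriv Generalize CS
        ((jbox i t (always φ)).imp (jbox i s (always (always φ)))) := by

  classical
  -- Abbreviations
  set A := always φ with hA
  -- ψ := □φ → ○□φ
  -- Step 1: the tautology ((X → (Y ∧ Z)) → (X → Z))
  have htaut : ∀ X Y Z : JFml h,
      Tautology ((X.imp (and' Y Z)).imp (X.imp Z)) := by
    intro X Y Z v hbot himp
    simp only [and', or', neg, himp]
    tauto
  -- mix axiom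
  have hmix : Axiom (h := h) Generalize
      ((always φ).imp (and' φ (next (always φ)))) := Axiom.mix φ
  -- internalized versions via axiomatically appropriate CS
  obtain ⟨c1, hc1⟩ := hApp _ (Axiom.taut (htaut (always φ) φ (next (always φ)))) i
  obtain ⟨c2, hc2⟩ := hApp _ hmix i
  obtain ⟨c3, hc3⟩ := hApp _ (Axiom.ind (always φ)) i
  -- derive [c1·c2]_i (□φ → ○□φ)
  have d1 : Deriv Generalize CS (jbox i (JTm.const c1)
      (((always φ).imp (and' φ (next (always φ)))).imp
        ((always φ).imp (next (always φ))))) := Deriv.constNec hc1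
  have d2 : Deriv Generalize CS (jbox i (JTm.const c2)
      ((always φ).imp (and' φ (next (always φ))))) := Deriv.constNec hc2
  have dpsi : Deriv Generalize CS
      (jbox i ((JTm.const c1).times (JTm.const c2))
        ((always φ).imp (next (always φ)))) :=
    Deriv.mp (Deriv.mp (Deriv.ax (Axiom.app i _ _ _ _)) d1) d2
  set u : JTm := (JTm.const c1).times (JTm.const c2) with hu
  -- □[u]ψ
  have dbox : Deriv Generalize CS
      (always (jbox i u ((always φ).imp (next (always φ))))) :=
    Deriv.alwaysNec dpsi
  -- generalize: □[u]ψ → [⇑u]□ψ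
  have dgen : Deriv Generalize CS
      (jbox i u.dUp (always ((always φ).imp (next (always φ))))) :=
    Deriv.mp (Deriv.ax (Axiom.extra ⟨i, u, _, rfl⟩)) dbox
  -- [c3] ind : □(□φ → ○□φ) → (□φ → □□φ)
  have d3 : Deriv Generalize CS (jbox i (JTm.const c3)
      ((always ((always φ).imp (next (always φ)))).imp
        ((always φ).imp (always (always φ))))) := Deriv.constNec hc3
  -- app: [c3·⇑u](□φ → □□φ)
  have d4 : Deriv Generalize CS
      (jbox i ((JTm.const c3).times u.dUp)
        ((always φ).imp (always (always φ)))) :=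
    Deriv.mp (Deriv.mp (Deriv.ax (Axiom.app i _ _ _ _)) d3) dgen
  -- final app with [t]□φ
  refine ⟨((JTm.const c3).times u.dUp).times t, ?_⟩
  exact Deriv.mp (Deriv.ax (Axiom.app i _ _ _ _)) d4
end
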